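/- (q-Binomial theorem) For 0<q<1, complex a, and |z|<1, ∑_{k=0}^∞ ((a;q)_k/(q;q)_k) z^k = (a z; q)_∞ / (z; q)_∞. -/

import Mathlib

open Finset

noncomputable def qPoch (q a : ℂ) (n : ℕ) : ℂ := ∏ k ∈ Finset.range n, (1 - a * q ^ k)

noncomputable def qPochInf (q a : ℂ) : ℂ := ∏' k : ℕ, (1 - a * q ^ k)

noncomputable def cauchyP (q x y : ℂ) (n : ℕ) : ℂ := ∏ k ∈ Finset.range n, (x - q ^ k * y)

noncomputable def qBinom (q : ℂ) (n k : ℕ) : ℂ := qPoch q q n / (qPoch q q k * qPoch q q (n - k))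

noncomputable def Dq (q : ℂ) (f : ℂ → ℂ) : ℂ → ℂ := fun a => (f a - f (q * a)) / a

noncomputable def thetaq (q : ℂ) (f : ℂ → ℂ) : ℂ → ℂ := fun a => (f (a / q) - f a) / (a / q)

noncomputable def qIntegral (q : ℂ) (f : ℂ → ℂ) (c d : ℂ) : ℂ :=
  (1 - q) * ∑' n : ℕ, q ^ n * (d * f (d * q ^ n) - c * f (c * q ^ n))

section QBin

variable {q : ℝ}

private lemma norm_qc (hq0 : 0 < q) : ‖(q : ℂ)‖ = q := by
  rw [Complex.norm_real]; exact abs_of_nonneg hq0.le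

private lemma norm_qc_pow (hq0 : 0 < q) (k : ℕ) : ‖(q : ℂ) ^ k‖ = q ^ k := by
  rw [norm_pow, norm_qc hq0]

private lemma geom_bound (hq0 : 0 < q) (hq1 : q < 1) (n : ℕ) :
    ∑ i ∈ range n, q ^ i ≤ 1 / (1 - q) := by
  rw [geom_sum_eq (by intro h; rw [h] at hq1; linarith),
    show q ^ n - 1 = -(1 - q ^ n) by ring, show q - 1 = -(1 - q) by ring, neg_div_neg_eq,
    div_le_div_iff₀ (by linarith) (by linarith)]
  nlinarith [pow_nonneg hq0.le n]

private lemma summable_wq (hq0 : 0 < q) (hq1 : q < 1) (w : ℂ) :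
    Summable (fun k : ℕ => w * (q : ℂ) ^ k) :=
  (summable_geometric_of_norm_lt_one (by rw [norm_qc hq0]; exact hq1)).mul_left w

private lemma factor_ne (hq0 : 0 < q) (hq1 : q < 1) {w : ℂ} (hw : ‖w‖ < 1) (k : ℕ) :
    1 - w * (q : ℂ) ^ k ≠ 0 := by
  intro h
  have h1 : w * (q : ℂ) ^ k = 1 := by linear_combination -h
  have hn : ‖w * (q : ℂ) ^ k‖ < 1 := by
    rw [norm_mul, norm_qc_pow hq0]
    calc ‖w‖ * q ^ k ≤ ‖w‖ * 1 := by
          apply mul_le_mul_of_nonneg_left (pow_le_one₀ hq0.le hq1.le) (norm_nonneg w)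
      _ = ‖w‖ := mul_one _
      _ < 1 := hw
  rw [h1, norm_one] at hn
  exact lt_irrefl _ hn

private lemma hasProd_ne (hq0 : 0 < q) (hq1 : q < 1) {w : ℂ}
    (hne : ∀ k : ℕ, 1 - w * (q : ℂ) ^ k ≠ 0) :
    HasProd (fun k : ℕ => 1 - w * (q : ℂ) ^ k)
      (Complex.exp (∑' k : ℕ, Complex.log (1 - w * (q : ℂ) ^ k))) := by
  have hs : Summable (fun k : ℕ => Complex.log (1 - w * (q : ℂ) ^ k)) :=
    (summable_wq hq0 hq1 w).clog_one_sub
  have H := hs.hasSum.cexp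
  have he : (Complex.exp ∘ fun k : ℕ => Complex.log (1 - w * (q : ℂ) ^ k))
      = fun k : ℕ => 1 - w * (q : ℂ) ^ k := by
    funext k
    simp only [Function.comp_apply]
    exact Complex.exp_log (hne k)
  rwa [he] at H

private lemma hasProd_zero {w : ℂ} (h : ∃ k : ℕ, 1 - w * (q : ℂ) ^ k = 0) :
    HasProd (fun k : ℕ => 1 - w * (q : ℂ) ^ k) 0 := by
  obtain ⟨k0, h0⟩ := h
  have he : (fun s : Finset ℕ => ∏ i ∈ s, (1 - w * (q : ℂ) ^ i)) =ᶠ[Filter.atTop]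
      (fun _ => (0 : ℂ)) := by
    filter_upwards [Filter.eventually_ge_atTop ({k0} : Finset ℕ)] with s hs
    exact Finset.prod_eq_zero (hs (Finset.mem_singleton_self k0)) h0
  exact tendsto_const_nhds.congr' he.symm

private lemma hasProd_all (hq0 : 0 < q) (hq1 : q < 1) (w : ℂ) :
    HasProd (fun k : ℕ => 1 - w * (q : ℂ) ^ k) (qPochInf (q : ℂ) w) := by
  unfold qPochInf
  by_cases h : ∀ k : ℕ, 1 - w * (q : ℂ) ^ k ≠ 0
  · have hm : Multipliable (fun k : ℕ => 1 - w * (q : ℂ) ^ k) := ⟨_, hasProd_ne hq0 hq1 h⟩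
    exact hm.hasProd
  · push_neg at h
    have hm : Multipliable (fun k : ℕ => 1 - w * (q : ℂ) ^ k) := ⟨_, hasProd_zero h⟩
    exact hm.hasProd

private lemma qPochInf_ne (hq0 : 0 < q) (hq1 : q < 1) {w : ℂ} (hw : ‖w‖ < 1) :
    qPochInf (q : ℂ) w ≠ 0 := by
  have h := (hasProd_ne hq0 hq1 (factor_ne hq0 hq1 hw)).tprod_eq
  unfold qPochInf
  rw [h]
  exact Complex.exp_ne_zero _

private lemma qPoch_num_le (hq0 : 0 < q) (hq1 : q < 1) (a : ℂ) (k : ℕ) :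
    ‖qPoch (q : ℂ) a k‖ ≤ Real.exp (‖a‖ / (1 - q)) := by
  rw [qPoch, norm_prod]
  calc ∏ j ∈ range k, ‖1 - a * (q : ℂ) ^ j‖
      ≤ ∏ j ∈ range k, Real.exp (‖a‖ * q ^ j) := by
        apply Finset.prod_le_prod (fun j _ => norm_nonneg _)
        intro j _
        calc ‖1 - a * (q : ℂ) ^ j‖ ≤ ‖(1 : ℂ)‖ + ‖a * (q : ℂ) ^ j‖ := norm_sub_le _ _
          _ = 1 + ‖a‖ * q ^ j := by rw [norm_one, norm_mul, norm_qc_pow hq0]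
          _ ≤ Real.exp (‖a‖ * q ^ j) := by linarith [Real.add_one_le_exp (‖a‖ * q ^ j)]
    _ = Real.exp (∑ j ∈ range k, ‖a‖ * q ^ j) := (Real.exp_sum _ _).symm
    _ ≤ Real.exp (‖a‖ / (1 - q)) := by
        apply Real.exp_le_exp.mpr
        rw [← Finset.mul_sum]
        calc ‖a‖ * ∑ j ∈ range k, q ^ j ≤ ‖a‖ * (1 / (1 - q)) :=
              mul_le_mul_of_nonneg_left (geom_bound hq0 hq1 k) (norm_nonneg a)
          _ = ‖a‖ / (1 - q) := by ring

private lemma qPoch_den_eq (k : ℕ) :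
    qPoch (q : ℂ) (q : ℂ) k = ((∏ j ∈ range k, (1 - q ^ (j + 1)) : ℝ) : ℂ) := by
  rw [qPoch]
  push_cast
  refine Finset.prod_congr rfl (fun j _ => ?_)
  rw [pow_succ']

private lemma den_pos (hq0 : 0 < q) (hq1 : q < 1) (k : ℕ) :
    0 < ∏ j ∈ range k, (1 - q ^ (j + 1)) := by
  apply Finset.prod_pos
  intro j _
  have : q ^ (j + 1) < 1 := pow_lt_one₀ hq0.le hq1 (Nat.succ_ne_zero j)
  linarith

private lemma den_ge (hq0 : 0 < q) (hq1 : q < 1) (k : ℕ) :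
    Real.exp (-(q / (1 - q) ^ 2)) ≤ ∏ j ∈ range k, (1 - q ^ (j + 1)) := by
  have h1q : (0 : ℝ) < 1 - q := by linarith
  calc Real.exp (-(q / (1 - q) ^ 2))
      ≤ Real.exp (-(∑ j ∈ range k, q ^ (j + 1) / (1 - q))) := by
        apply Real.exp_le_exp.mpr
        apply neg_le_neg
        have he : ∑ j ∈ range k, q ^ (j + 1) / (1 - q)
            = (∑ j ∈ range k, q ^ j) * (q / (1 - q)) := by
          rw [Finset.sum_mul]
          refine Finset.sum_congr rfl (fun j _ => ?_)
          rw [pow_succ]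
          ring
        rw [he]
        calc (∑ j ∈ range k, q ^ j) * (q / (1 - q))
            ≤ (1 / (1 - q)) * (q / (1 - q)) :=
              mul_le_mul_of_nonneg_right (geom_bound hq0 hq1 k)
                (div_nonneg hq0.le h1q.le)
          _ = q / (1 - q) ^ 2 := by
              rw [div_mul_div_comm, one_mul, sq]
    _ = ∏ j ∈ range k, Real.exp (-(q ^ (j + 1) / (1 - q))) := by
        rw [← Real.exp_sum, ← Finset.sum_neg_distrib]
    _ ≤ ∏ j ∈ range k, (1 - q ^ (j + 1)) := by
        apply Finset.prod_le_prod (fun j _ => (Real.exp_pos _).le)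
        intro j _
        set t := q ^ (j + 1) with ht
        have ht0 : 0 < t := pow_pos hq0 _
        have ht1 : t ≤ q := by
          calc t ≤ q ^ 1 := pow_le_pow_of_le_one hq0.le hq1.le (by omega)
            _ = q := pow_one q
        have h1t : 0 < 1 - t := by linarith
        have hexp : 0 < Real.exp (t / (1 - q)) := Real.exp_pos _
        have e1 : 1 + t / (1 - q) ≤ Real.exp (t / (1 - q)) := by
          linarith [Real.add_one_le_exp (t / (1 - q))]
        have e3 : (1 - q) * (t / (1 - q)) = t := by field_simp
        have e4 : (1 - q) * (t / (1 - q)) ≤ (1 - t) * (t / (1 - q)) :=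
          mul_le_mul_of_nonneg_right (by linarith) (div_nonneg ht0.le h1q.le)
        have key : 1 ≤ (1 - t) * Real.exp (t / (1 - q)) := by
          nlinarith [mul_le_mul_of_nonneg_left e1 h1t.le]
        have e5 : (Real.exp (t / (1 - q)))⁻¹ * Real.exp (t / (1 - q)) = 1 :=
          inv_mul_cancel₀ (ne_of_gt hexp)
        rw [show -(t / (1 - q)) = -(t / (1 - q)) from rfl, Real.exp_neg]
        nlinarith [inv_nonneg.mpr hexp.le]

private lemma qPoch_den_norm (hq0 : 0 < q) (hq1 : q < 1) (k : ℕ) :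
    Real.exp (-(q / (1 - q) ^ 2)) ≤ ‖qPoch (q : ℂ) (q : ℂ) k‖ := by
  rw [qPoch_den_eq, Complex.norm_real, Real.norm_eq_abs, abs_of_pos (den_pos hq0 hq1 k)]
  exact den_ge hq0 hq1 k

private lemma qPoch_den_ne (hq0 : 0 < q) (hq1 : q < 1) (k : ℕ) :
    qPoch (q : ℂ) (q : ℂ) k ≠ 0 := by
  rw [qPoch_den_eq]
  exact_mod_cast ne_of_gt (den_pos hq0 hq1 k)

/-- the constant bounding the coefficients -/
private lemma coef_norm_le (hq0 : 0 < q) (hq1 : q < 1) (a : ℂ) (k : ℕ) :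
    ‖qPoch (q : ℂ) a k / qPoch (q : ℂ) (q : ℂ) k‖
      ≤ Real.exp (‖a‖ / (1 - q)) / Real.exp (-(q / (1 - q) ^ 2)) := by
  rw [norm_div]
  exact div_le_div₀ (Real.exp_pos _).le (qPoch_num_le hq0 hq1 a k) (Real.exp_pos _)
    (qPoch_den_norm hq0 hq1 k)

private lemma summable_main (hq0 : 0 < q) (hq1 : q < 1) (a : ℂ) {w : ℂ} (hw : ‖w‖ < 1) :
    Summable (fun k : ℕ => qPoch (q : ℂ) a k / qPoch (q : ℂ) (q : ℂ) k * w ^ k) := by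
  set C := Real.exp (‖a‖ / (1 - q)) / Real.exp (-(q / (1 - q) ^ 2)) with hC
  apply Summable.of_norm
  apply Summable.of_nonneg_of_le (fun k => norm_nonneg _) (fun k => ?_)
    ((summable_geometric_of_lt_one (norm_nonneg w) hw).mul_left C)
  rw [norm_mul, norm_pow]
  exact mul_le_mul_of_nonneg_right (coef_norm_le hq0 hq1 a k) (pow_nonneg (norm_nonneg w) k)

noncomputable def qF (q : ℝ) (a w : ℂ) : ℂ :=
  ∑' k : ℕ, qPoch (q : ℂ) a k / qPoch (q : ℂ) (q : ℂ) k * w ^ k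

private lemma hasSum_qF (hq0 : 0 < q) (hq1 : q < 1) (a : ℂ) {w : ℂ} (hw : ‖w‖ < 1) :
    HasSum (fun k : ℕ => qPoch (q : ℂ) a k / qPoch (q : ℂ) (q : ℂ) k * w ^ k) (qF q a w) :=
  (summable_main hq0 hq1 a hw).hasSum

private lemma coef_rec (hq0 : 0 < q) (hq1 : q < 1) (a : ℂ) (k : ℕ) :
    qPoch (q : ℂ) a (k + 1) / qPoch (q : ℂ) (q : ℂ) (k + 1) * (1 - (q : ℂ) ^ (k + 1))
      = qPoch (q : ℂ) a k / qPoch (q : ℂ) (q : ℂ) k * (1 - a * (q : ℂ) ^ k) := by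
  have h1 : qPoch (q : ℂ) a (k + 1) = qPoch (q : ℂ) a k * (1 - a * (q : ℂ) ^ k) := by
    rw [qPoch, qPoch, Finset.prod_range_succ]
  have h2 : qPoch (q : ℂ) (q : ℂ) (k + 1)
      = qPoch (q : ℂ) (q : ℂ) k * (1 - (q : ℂ) ^ (k + 1)) := by
    rw [qPoch, qPoch, Finset.prod_range_succ, pow_succ']
  have hd1 : qPoch (q : ℂ) (q : ℂ) k ≠ 0 := qPoch_den_ne hq0 hq1 k
  have hd2 : (1 - (q : ℂ) ^ (k + 1)) ≠ 0 := by
    have : ((1 - q ^ (k + 1) : ℝ) : ℂ) ≠ 0 := by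
      exact_mod_cast ne_of_gt (by
        have : q ^ (k + 1) < 1 := pow_lt_one₀ hq0.le hq1 (Nat.succ_ne_zero k)
        linarith : (0 : ℝ) < 1 - q ^ (k + 1))
    push_cast at this
    exact this
  rw [h1, h2]
  field_simp

private lemma funct_eq (hq0 : 0 < q) (hq1 : q < 1) (a : ℂ) {w : ℂ} (hw : ‖w‖ < 1) :
    (1 - w) * qF q a w = (1 - a * w) * qF q a ((q : ℂ) * w) := by
  set c : ℕ → ℂ := fun k => qPoch (q : ℂ) a k / qPoch (q : ℂ) (q : ℂ) k with hc
  have hqw : ‖(q : ℂ) * w‖ < 1 := by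
    rw [norm_mul, norm_qc hq0]
    calc q * ‖w‖ ≤ 1 * ‖w‖ := mul_le_mul_of_nonneg_right hq1.le (norm_nonneg w)
      _ = ‖w‖ := one_mul _
      _ < 1 := hw
  have h1 := hasSum_qF hq0 hq1 a hw
  have h3 := hasSum_qF hq0 hq1 a hqw
  have hu : HasSum (fun k : ℕ => c k * w ^ k - c k * ((q : ℂ) * w) ^ k)
      (qF q a w - qF q a ((q : ℂ) * w)) := h1.sub h3
  have hu' : HasSum (fun k : ℕ => c k * (1 - (q : ℂ) ^ k) * w ^ k)
      (qF q a w - qF q a ((q : ℂ) * w)) := by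
    have he : (fun k : ℕ => c k * (1 - (q : ℂ) ^ k) * w ^ k)
        = fun k : ℕ => c k * w ^ k - c k * ((q : ℂ) * w) ^ k := by
      funext k; rw [mul_pow]; ring
    rw [he]; exact hu
  have hu2 : HasSum (fun k : ℕ => c (k + 1) * (1 - (q : ℂ) ^ (k + 1)) * w ^ (k + 1))
      ((qF q a w - qF q a ((q : ℂ) * w))
        - ∑ i ∈ range 1, c i * (1 - (q : ℂ) ^ i) * w ^ i) := by
    exact (hasSum_nat_add_iff' (f := fun k : ℕ => c k * (1 - (q : ℂ) ^ k) * w ^ k) 1).mpr hu'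
  have hz0 : ∑ i ∈ range 1, c i * (1 - (q : ℂ) ^ i) * w ^ i = 0 := by simp
  rw [hz0, sub_zero] at hu2
  have hre : (fun k : ℕ => c (k + 1) * (1 - (q : ℂ) ^ (k + 1)) * w ^ (k + 1))
      = fun k : ℕ => c k * w ^ k * w - (c k * ((q : ℂ) * w) ^ k) * (a * w) := by
    funext k
    rw [hc]
    rw [show qPoch (q : ℂ) a (k+1) / qPoch (q : ℂ) (q : ℂ) (k+1) * (1 - (q : ℂ) ^ (k + 1)) * w ^ (k+1)
      = (qPoch (q : ℂ) a (k+1) / qPoch (q : ℂ) (q : ℂ) (k+1) * (1 - (q : ℂ) ^ (k + 1))) * w ^ (k+1) by ring,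
      coef_rec hq0 hq1 a k, pow_succ, mul_pow]
    ring
  rw [hre] at hu2
  have h4 : HasSum (fun k : ℕ => c k * w ^ k * w - (c k * ((q : ℂ) * w) ^ k) * (a * w))
      (qF q a w * w - qF q a ((q : ℂ) * w) * (a * w)) :=
    (h1.mul_right w).sub (h3.mul_right (a * w))
  have huniq := hu2.unique h4
  linear_combination huniq

private lemma iter_eq (hq0 : 0 < q) (hq1 : q < 1) (a : ℂ) {z : ℂ} (hz : ‖z‖ < 1) (n : ℕ) :
    qF q a z * qPoch (q : ℂ) z n = qPoch (q : ℂ) (a * z) n * qF q a ((q : ℂ) ^ n * z) := by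
  induction n with
  | zero => simp [qPoch]
  | succ n ih =>
    have hwn : ‖(q : ℂ) ^ n * z‖ < 1 := by
      rw [norm_mul, norm_qc_pow hq0]
      calc q ^ n * ‖z‖ ≤ 1 * ‖z‖ :=
            mul_le_mul_of_nonneg_right (pow_le_one₀ hq0.le hq1.le) (norm_nonneg z)
        _ = ‖z‖ := one_mul _
        _ < 1 := hz
    have hfe := funct_eq hq0 hq1 a hwn
    rw [show (q : ℂ) * ((q : ℂ) ^ n * z) = (q : ℂ) ^ (n + 1) * z by ring] at hfe
    have eA : qPoch (q : ℂ) z (n + 1) = qPoch (q : ℂ) z n * (1 - z * (q : ℂ) ^ n) :=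
      Finset.prod_range_succ _ n
    have eB : qPoch (q : ℂ) (a * z) (n + 1)
        = qPoch (q : ℂ) (a * z) n * (1 - a * z * (q : ℂ) ^ n) :=
      Finset.prod_range_succ _ n
    rw [eA, eB]
    linear_combination (1 - z * (q : ℂ) ^ n) * ih + qPoch (q : ℂ) (a * z) n * hfe

private lemma tail_tendsto (hq0 : 0 < q) (hq1 : q < 1) (a : ℂ) {z : ℂ} (hz : ‖z‖ < 1) :
    Filter.Tendsto (fun n : ℕ => qF q a ((q : ℂ) ^ n * z)) Filter.atTop (nhds 1) := by
  set c : ℕ → ℂ := fun k => qPoch (q : ℂ) a k / qPoch (q : ℂ) (q : ℂ) k with hc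
  set C := Real.exp (‖a‖ / (1 - q)) / Real.exp (-(q / (1 - q) ^ 2)) with hC
  have hC0 : 0 ≤ C := div_nonneg (Real.exp_pos _).le (Real.exp_pos _).le
  have h1z : (0 : ℝ) < 1 - ‖z‖ := by linarith
  rw [tendsto_iff_norm_sub_tendsto_zero]
  apply squeeze_zero (fun n => norm_nonneg _) (fun n => ?_)
    (g := fun n : ℕ => (C * (1 / (1 - ‖z‖))) * q ^ n)
  · have := tendsto_pow_atTop_nhds_zero_of_lt_one hq0.le hq1
    simpa using this.const_mul (C * (1 / (1 - ‖z‖)))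
  · -- bound for each n
    set w := (q : ℂ) ^ n * z with hwdef
    have hwn : ‖w‖ < 1 := by
      rw [hwdef, norm_mul, norm_qc_pow hq0]
      calc q ^ n * ‖z‖ ≤ 1 * ‖z‖ :=
            mul_le_mul_of_nonneg_right (pow_le_one₀ hq0.le hq1.le) (norm_nonneg z)
        _ = ‖z‖ := one_mul _
        _ < 1 := hz
    have hs := hasSum_qF hq0 hq1 a hwn
    have h1 : HasSum (fun k : ℕ => c (k + 1) * w ^ (k + 1))
        (qF q a w - ∑ i ∈ range 1, c i * w ^ i) := by
      exact (hasSum_nat_add_iff' (f := fun k : ℕ => c k * w ^ k) 1).mpr hs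
    have hz1 : ∑ i ∈ range 1, c i * w ^ i = 1 := by simp [hc, qPoch]
    rw [hz1] at h1
    have hterm : ∀ k : ℕ, ‖c (k + 1) * w ^ (k + 1)‖ ≤ (C * q ^ n) * ‖z‖ ^ k := by
      intro k
      rw [norm_mul, norm_pow]
      have hwnorm : ‖w‖ = q ^ n * ‖z‖ := by rw [hwdef, norm_mul, norm_qc_pow hq0]
      have hb1 : ‖c (k + 1)‖ ≤ C := coef_norm_le hq0 hq1 a (k + 1)
      have hb2 : ‖w‖ ^ (k + 1) ≤ q ^ n * ‖z‖ ^ k := by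
        rw [hwnorm, mul_pow]
        have e1 : (q ^ n) ^ (k + 1) ≤ q ^ n := by
          calc (q ^ n) ^ (k + 1) ≤ (q ^ n) ^ 1 :=
                pow_le_pow_of_le_one (pow_nonneg hq0.le n) (pow_le_one₀ hq0.le hq1.le) (by omega)
            _ = q ^ n := pow_one _
        have e2 : ‖z‖ ^ (k + 1) ≤ ‖z‖ ^ k := by
          calc ‖z‖ ^ (k + 1) = ‖z‖ ^ k * ‖z‖ := pow_succ _ _
            _ ≤ ‖z‖ ^ k * 1 := mul_le_mul_of_nonneg_left hz.le (pow_nonneg (norm_nonneg z) k)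
            _ = ‖z‖ ^ k := mul_one _
        calc (q ^ n) ^ (k + 1) * ‖z‖ ^ (k + 1) ≤ q ^ n * ‖z‖ ^ (k + 1) :=
              mul_le_mul_of_nonneg_right e1 (pow_nonneg (norm_nonneg z) _)
          _ ≤ q ^ n * ‖z‖ ^ k := mul_le_mul_of_nonneg_left e2 (pow_nonneg hq0.le n)
      calc ‖c (k + 1)‖ * ‖w‖ ^ (k + 1) ≤ C * (q ^ n * ‖z‖ ^ k) := by
            apply mul_le_mul hb1 hb2 (pow_nonneg (norm_nonneg _) _) hC0
        _ = (C * q ^ n) * ‖z‖ ^ k := by ring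
    have hgeo : Summable (fun k : ℕ => (C * q ^ n) * ‖z‖ ^ k) :=
      (summable_geometric_of_lt_one (norm_nonneg z) hz).mul_left _
    have hsn : Summable (fun k : ℕ => ‖c (k + 1) * w ^ (k + 1)‖) :=
      Summable.of_nonneg_of_le (fun k => norm_nonneg _) hterm hgeo
    calc ‖qF q a w - 1‖ = ‖∑' k : ℕ, c (k + 1) * w ^ (k + 1)‖ := by rw [h1.tsum_eq]
      _ ≤ ∑' k : ℕ, ‖c (k + 1) * w ^ (k + 1)‖ := norm_tsum_le_tsum_norm hsn
      _ ≤ ∑' k : ℕ, (C * q ^ n) * ‖z‖ ^ k := Summable.tsum_le_tsum hterm hsn hgeo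
      _ = (C * q ^ n) * (1 - ‖z‖)⁻¹ := by
          rw [tsum_mul_left, tsum_geometric_of_lt_one (norm_nonneg z) hz]
      _ = (C * (1 / (1 - ‖z‖))) * q ^ n := by ring

theorem q_binomial_theorem (q : ℝ) (hq0 : 0 < q) (hq1 : q < 1) (a z : ℂ) (hz : ‖z‖ < 1) :
    HasSum (fun k : ℕ => qPoch (q : ℂ) a k / qPoch (q : ℂ) (q : ℂ) k * z ^ k)
      (qPochInf (q : ℂ) (a * z) / qPochInf (q : ℂ) z) := by
  have hS := hasSum_qF hq0 hq1 a hz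
  suffices h : qF q a z = qPochInf (q : ℂ) (a * z) / qPochInf (q : ℂ) z by
    rwa [h] at hS
  have hP : Filter.Tendsto (fun n : ℕ => qPoch (q : ℂ) z n) Filter.atTop
      (nhds (qPochInf (q : ℂ) z)) := (hasProd_all hq0 hq1 z).tendsto_prod_nat
  have hQ : Filter.Tendsto (fun n : ℕ => qPoch (q : ℂ) (a * z) n) Filter.atTop
      (nhds (qPochInf (q : ℂ) (a * z))) := (hasProd_all hq0 hq1 (a * z)).tendsto_prod_nat
  have hT := tail_tendsto hq0 hq1 a hz
  have h1 : Filter.Tendsto (fun n : ℕ => qF q a z * qPoch (q : ℂ) z n) Filter.atTop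
      (nhds (qF q a z * qPochInf (q : ℂ) z)) := hP.const_mul _
  have h2 : Filter.Tendsto (fun n : ℕ => qPoch (q : ℂ) (a * z) n * qF q a ((q : ℂ) ^ n * z))
      Filter.atTop (nhds (qPochInf (q : ℂ) (a * z) * 1)) := hQ.mul hT
  have h3 : Filter.Tendsto (fun n : ℕ => qF q a z * qPoch (q : ℂ) z n) Filter.atTop
      (nhds (qPochInf (q : ℂ) (a * z) * 1)) := by
    apply h2.congr
    intro n
    exact (iter_eq hq0 hq1 a hz n).symm
  have hkey : qF q a z * qPochInf (q : ℂ) z = qPochInf (q : ℂ) (a * z) * 1 :=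
    tendsto_nhds_unique h1 h3
  rw [mul_one] at hkey
  rw [eq_div_iff (qPochInf_ne hq0 hq1 hz)]
  exact hkey

end QBin
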